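/- Let (A₁,·₁,∘₁) and (A₂,·₂,∘₂) be transposed Novikov-Poisson algebras. On A₁ ⊗ A₂ define (a₁⊗a₂)·(b₁⊗b₂) = (a₁·₁b₁)⊗(a₂·₂b₂) and (a₁⊗a₂)∘(b₁⊗b₂) = (a₁·₁b₁)⊗(a₂∘₂b₂) + (a₁∘₁b₁)⊗(a₂·₂b₂). Then (A₁⊗A₂,·,∘) is a transposed Novikov-Poisson algebra. -/
import Mathlib

open TensorProduct

private lemma auxD {k A : Type*} [Field k] [AddCommGroup A] [Module k A]
    (hchar : (2:k) ≠ 0) (mul cir : A →ₗ[k] A →ₗ[k] A)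
    (hcomm : ∀ x y : A, mul x y = mul y x)
    (htnp1 : ∀ x y z : A, cir (mul x y) z = cir (mul x z) y)
    (htnp2 : ∀ x y z : A, (2:k) • mul z (cir x y) = cir (mul z x) y + cir x (mul z y)) :
    ∀ x y z : A, mul z (cir x y) = mul y (cir x z) := by
  intro x y z
  have h : (2:k) • mul z (cir x y) = (2:k) • mul y (cir x z) := by
    rw [htnp2 x y z, htnp2 x z y, hcomm z x, htnp1 x z y, hcomm x y, hcomm z y]
  exact smul_right_injective A hchar h

theorem stmt10 {k A₁ A₂ : Type*} [Field k]
    [AddCommGroup A₁] [Module k A₁] [AddCommGroup A₂] [Module k A₂]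
    (hchar : (2:k) ≠ 0)
    (mul₁ cir₁ : A₁ →ₗ[k] A₁ →ₗ[k] A₁) (mul₂ cir₂ : A₂ →ₗ[k] A₂ →ₗ[k] A₂)
    (hcomm₁ : ∀ x y : A₁, mul₁ x y = mul₁ y x)
    (hassoc₁ : ∀ x y z : A₁, mul₁ (mul₁ x y) z = mul₁ x (mul₁ y z))
    (hnov1₁ : ∀ x y z : A₁, cir₁ (cir₁ x y) z = cir₁ (cir₁ x z) y)
    (hnov2₁ : ∀ x y z : A₁,
      cir₁ (cir₁ x y) z - cir₁ x (cir₁ y z) = cir₁ (cir₁ y x) z - cir₁ y (cir₁ x z))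
    (htnp1₁ : ∀ x y z : A₁, cir₁ (mul₁ x y) z = cir₁ (mul₁ x z) y)
    (htnp2₁ : ∀ x y z : A₁,
      (2:k) • mul₁ z (cir₁ x y) = cir₁ (mul₁ z x) y + cir₁ x (mul₁ z y))
    (hcomm₂ : ∀ x y : A₂, mul₂ x y = mul₂ y x)
    (hassoc₂ : ∀ x y z : A₂, mul₂ (mul₂ x y) z = mul₂ x (mul₂ y z))
    (hnov1₂ : ∀ x y z : A₂, cir₂ (cir₂ x y) z = cir₂ (cir₂ x z) y)
    (hnov2₂ : ∀ x y z : A₂,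
      cir₂ (cir₂ x y) z - cir₂ x (cir₂ y z) = cir₂ (cir₂ y x) z - cir₂ y (cir₂ x z))
    (htnp1₂ : ∀ x y z : A₂, cir₂ (mul₂ x y) z = cir₂ (mul₂ x z) y)
    (htnp2₂ : ∀ x y z : A₂,
      (2:k) • mul₂ z (cir₂ x y) = cir₂ (mul₂ z x) y + cir₂ x (mul₂ z y))
    (mulT cirT : TensorProduct k A₁ A₂ →ₗ[k] TensorProduct k A₁ A₂ →ₗ[k] TensorProduct k A₁ A₂)
    (hmulT : ∀ (a₁ b₁ : A₁) (a₂ b₂ : A₂),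
      mulT (a₁ ⊗ₜ[k] a₂) (b₁ ⊗ₜ[k] b₂) = (mul₁ a₁ b₁) ⊗ₜ[k] (mul₂ a₂ b₂))
    (hcirT : ∀ (a₁ b₁ : A₁) (a₂ b₂ : A₂),
      cirT (a₁ ⊗ₜ[k] a₂) (b₁ ⊗ₜ[k] b₂) =
        (mul₁ a₁ b₁) ⊗ₜ[k] (cir₂ a₂ b₂) + (cir₁ a₁ b₁) ⊗ₜ[k] (mul₂ a₂ b₂)) :
    (∀ x y : TensorProduct k A₁ A₂, mulT x y = mulT y x) ∧
    (∀ x y z : TensorProduct k A₁ A₂, mulT (mulT x y) z = mulT x (mulT y z)) ∧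
    (∀ x y z : TensorProduct k A₁ A₂, cirT (cirT x y) z = cirT (cirT x z) y) ∧
    (∀ x y z : TensorProduct k A₁ A₂,
      cirT (cirT x y) z - cirT x (cirT y z) = cirT (cirT y x) z - cirT y (cirT x z)) ∧
    (∀ x y z : TensorProduct k A₁ A₂, cirT (mulT x y) z = cirT (mulT x z) y) ∧
    (∀ x y z : TensorProduct k A₁ A₂,
      (2:k) • mulT z (cirT x y) = cirT (mulT z x) y + cirT x (mulT z y)) := by
  -- derived identities in each factor
  have hD₁ := auxD hchar mul₁ cir₁ hcomm₁ htnp1₁ htnp2₁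
  have hD₂ := auxD hchar mul₂ cir₂ hcomm₂ htnp1₂ htnp2₂
  have hm₁ : ∀ a b c : A₁, mul₁ (mul₁ a b) c = mul₁ (mul₁ a c) b := fun a b c => by
    rw [hassoc₁, hcomm₁ b c, ← hassoc₁]
  have hm₂ : ∀ a b c : A₂, mul₂ (mul₂ a b) c = mul₂ (mul₂ a c) b := fun a b c => by
    rw [hassoc₂, hcomm₂ b c, ← hassoc₂]
  have hG₁ : ∀ a b c : A₁, mul₁ (cir₁ a b) c = mul₁ b (cir₁ a c) := fun a b c => by
    rw [hcomm₁ (cir₁ a b) c, hD₁ a b c]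
  have hG₂ : ∀ a b c : A₂, mul₂ (cir₂ a b) c = mul₂ b (cir₂ a c) := fun a b c => by
    rw [hcomm₂ (cir₂ a b) c, hD₂ a b c]
  have hE₁ : ∀ x z y : A₁,
      cir₁ x (mul₁ z y) = (2:k) • mul₁ z (cir₁ x y) - cir₁ (mul₁ z x) y := fun x z y => by
    rw [eq_sub_iff_add_eq, add_comm]; exact (htnp2₁ x y z).symm
  have hE₂ : ∀ x z y : A₂,
      cir₂ x (mul₂ z y) = (2:k) • mul₂ z (cir₂ x y) - cir₂ (mul₂ z x) y := fun x z y => by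
    rw [eq_sub_iff_add_eq, add_comm]; exact (htnp2₂ x y z).symm
  have hE'₁ : ∀ x z y : A₁,
      cir₁ (mul₁ z x) y = (2:k) • mul₁ z (cir₁ x y) - cir₁ x (mul₁ z y) := fun x z y => by
    rw [eq_sub_iff_add_eq]; exact (htnp2₁ x y z).symm
  have hE'₂ : ∀ x z y : A₂,
      cir₂ (mul₂ z x) y = (2:k) • mul₂ z (cir₂ x y) - cir₂ x (mul₂ z y) := fun x z y => by
    rw [eq_sub_iff_add_eq]; exact (htnp2₂ x y z).symm
  have hF₁ : ∀ p q r : A₁,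
      cir₁ p (cir₁ q r) = cir₁ (cir₁ p q) r - cir₁ (cir₁ q p) r + cir₁ q (cir₁ p r) :=
    fun p q r => by
      have h := (sub_eq_sub_iff_sub_eq_sub.mp (hnov2₁ p q r)).symm
      exact sub_eq_iff_eq_add.mp h
  have hF₂ : ∀ p q r : A₂,
      cir₂ p (cir₂ q r) = cir₂ (cir₂ p q) r - cir₂ (cir₂ q p) r + cir₂ q (cir₂ p r) :=
    fun p q r => by
      have h := (sub_eq_sub_iff_sub_eq_sub.mp (hnov2₂ p q r)).symm
      exact sub_eq_iff_eq_add.mp h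
  -- pure-tensor versions of the six identities
  have pcomm : ∀ (a b : A₁) (p q : A₂),
      mulT (a ⊗ₜ[k] p) (b ⊗ₜ[k] q) = mulT (b ⊗ₜ[k] q) (a ⊗ₜ[k] p) := by
    intro a b p q
    rw [hmulT, hmulT, hcomm₁, hcomm₂]
  have passoc : ∀ (a b c : A₁) (p q r : A₂),
      mulT (mulT (a ⊗ₜ[k] p) (b ⊗ₜ[k] q)) (c ⊗ₜ[k] r)
        = mulT (a ⊗ₜ[k] p) (mulT (b ⊗ₜ[k] q) (c ⊗ₜ[k] r)) := by
    intro a b c p q r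
    rw [hmulT, hmulT, hmulT, hmulT, hassoc₁, hassoc₂]
  have pnov1 : ∀ (a b c : A₁) (p q r : A₂),
      cirT (cirT (a ⊗ₜ[k] p) (b ⊗ₜ[k] q)) (c ⊗ₜ[k] r)
        = cirT (cirT (a ⊗ₜ[k] p) (c ⊗ₜ[k] r)) (b ⊗ₜ[k] q) := by
    intro a b c p q r
    simp only [hcirT, map_add, LinearMap.add_apply]
    rw [hm₁ a b c, hnov1₂ p q r, htnp1₁ a b c, hG₂ p q r, hG₂ p r q,
        hG₁ a b c, hG₁ a c b, htnp1₂ p q r, hnov1₁ a b c, hm₂ p q r,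
        hD₂ p q r, hD₁ a b c]
  have ptnp1 : ∀ (a b c : A₁) (p q r : A₂),
      cirT (mulT (a ⊗ₜ[k] p) (b ⊗ₜ[k] q)) (c ⊗ₜ[k] r)
        = cirT (mulT (a ⊗ₜ[k] p) (c ⊗ₜ[k] r)) (b ⊗ₜ[k] q) := by
    intro a b c p q r
    rw [hmulT, hmulT, hcirT, hcirT, hm₁ a b c, htnp1₂ p q r, htnp1₁ a b c, hm₂ p q r]
  have ptnp2 : ∀ (a b c : A₁) (p q r : A₂),
      (2:k) • mulT (c ⊗ₜ[k] r) (cirT (a ⊗ₜ[k] p) (b ⊗ₜ[k] q))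
        = cirT (mulT (c ⊗ₜ[k] r) (a ⊗ₜ[k] p)) (b ⊗ₜ[k] q)
          + cirT (a ⊗ₜ[k] p) (mulT (c ⊗ₜ[k] r) (b ⊗ₜ[k] q)) := by
    intro a b c p q r
    simp only [hcirT, hmulT, map_add, LinearMap.add_apply]
    rw [hE'₂ p r q, hE₁ a c b,
        ← hassoc₁ a c b, hcomm₁ a c, hassoc₁ c a b,
        ← hassoc₂ p r q, hcomm₂ p r, hassoc₂ r p q]
    simp only [sub_tmul, tmul_sub, ← smul_tmul', tmul_smul, smul_sub, smul_add]
    module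
  have pnov2 : ∀ (a b c : A₁) (p q r : A₂),
      cirT (cirT (a ⊗ₜ[k] p) (b ⊗ₜ[k] q)) (c ⊗ₜ[k] r)
          - cirT (a ⊗ₜ[k] p) (cirT (b ⊗ₜ[k] q) (c ⊗ₜ[k] r))
        = cirT (cirT (b ⊗ₜ[k] q) (a ⊗ₜ[k] p)) (c ⊗ₜ[k] r)
          - cirT (b ⊗ₜ[k] q) (cirT (a ⊗ₜ[k] p) (c ⊗ₜ[k] r)) := by
    intro a b c p q r
    simp only [hcirT, map_add, LinearMap.add_apply]
    rw [hF₂ p q r, hF₁ a b c,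
        hE₂ p q r, hE₂ q p r, hE₁ a b c, hE₁ b a c,
        hG₂ p q r, hG₂ q p r, hG₁ a b c, hG₁ b a c,
        ← hassoc₁ a b c, ← hassoc₁ b a c, ← hassoc₂ p q r, ← hassoc₂ q p r,
        hcomm₁ b a, hcomm₂ q p]
    simp only [sub_tmul, tmul_sub, add_tmul, tmul_add, ← smul_tmul', tmul_smul,
      smul_sub, smul_add]
    module
  -- extend to all tensors by (tri)linearity
  refine ⟨?_, ?_, ?_, ?_, ?_, ?_⟩
  · intro x y
    induction x using TensorProduct.induction_on with
    | zero => simp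
    | add u v hu hv => simp only [map_add, LinearMap.add_apply, hu, hv]
    | tmul a p =>
      induction y using TensorProduct.induction_on with
      | zero => simp
      | add u v hu hv => simp only [map_add, LinearMap.add_apply, hu, hv]
      | tmul b q => exact pcomm a b p q
  · intro x y z
    induction x using TensorProduct.induction_on with
    | zero => simp
    | add u v hu hv => simp only [map_add, LinearMap.add_apply, hu, hv]
    | tmul a p =>
      induction y using TensorProduct.induction_on with
      | zero => simp
      | add u v hu hv => simp only [map_add, LinearMap.add_apply, hu, hv]
      | tmul b q =>
        induction z using TensorProduct.induction_on with
        | zero => simp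
        | add u v hu hv => simp only [map_add, LinearMap.add_apply, hu, hv]
        | tmul c r => exact passoc a b c p q r
  · intro x y z
    induction x using TensorProduct.induction_on with
    | zero => simp
    | add u v hu hv => simp only [map_add, LinearMap.add_apply, hu, hv]
    | tmul a p =>
      induction y using TensorProduct.induction_on with
      | zero => simp
      | add u v hu hv => simp only [map_add, LinearMap.add_apply, hu, hv]
      | tmul b q =>
        induction z using TensorProduct.induction_on with
        | zero => simp
        | add u v hu hv => simp only [map_add, LinearMap.add_apply, hu, hv]
        | tmul c r => exact pnov1 a b c p q r
  · intro x y z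
    induction x using TensorProduct.induction_on with
    | zero => simp
    | add u v hu hv =>
      simp only [map_add, LinearMap.add_apply]
      rw [add_sub_add_comm, add_sub_add_comm, hu, hv]
    | tmul a p =>
      induction y using TensorProduct.induction_on with
      | zero => simp
      | add u v hu hv =>
        simp only [map_add, LinearMap.add_apply]
        rw [add_sub_add_comm, add_sub_add_comm, hu, hv]
      | tmul b q =>
        induction z using TensorProduct.induction_on with
        | zero => simp
        | add u v hu hv =>
          simp only [map_add, LinearMap.add_apply]
          rw [add_sub_add_comm, add_sub_add_comm, hu, hv]
        | tmul c r => exact pnov2 a b c p q r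
  · intro x y z
    induction x using TensorProduct.induction_on with
    | zero => simp
    | add u v hu hv => simp only [map_add, LinearMap.add_apply, hu, hv]
    | tmul a p =>
      induction y using TensorProduct.induction_on with
      | zero => simp
      | add u v hu hv => simp only [map_add, LinearMap.add_apply, hu, hv]
      | tmul b q =>
        induction z using TensorProduct.induction_on with
        | zero => simp
        | add u v hu hv => simp only [map_add, LinearMap.add_apply, hu, hv]
        | tmul c r => exact ptnp1 a b c p q r
  · intro x y z
    induction x using TensorProduct.induction_on with
    | zero => simp
    | add u v hu hv => simp only [map_add, LinearMap.add_apply, smul_add, hu, hv]; abel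
    | tmul a p =>
      induction y using TensorProduct.induction_on with
      | zero => simp
      | add u v hu hv => simp only [map_add, LinearMap.add_apply, smul_add, hu, hv]; abel
      | tmul b q =>
        induction z using TensorProduct.induction_on with
        | zero => simp
        | add u v hu hv => simp only [map_add, LinearMap.add_apply, smul_add, hu, hv]; abel
        | tmul c r => exact ptnp2 a b c p q r
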